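/- Let S and T be finite sets and let f : S ⇸ T and g : T ⇸ S be matchings (partial injections). Then there exists a matching M : S ⇸ T such that (1) the coimage of f is contained in the coimage of M, (2) the coimage of g is contained in the image of M, and (3) whenever M(s) = t, either f(s) = t or g(t) = s. -/
import Mathlib


/-- A matching (partial injection) from `S` to `T`, encoded as an `Option`-valued map:
no two elements of `S` are sent to the same element of `T`. -/
def IsMatching {S T : Type*} (f : S → Option T) : Prop :=
  ∀ s₁ s₂ t, f s₁ = some t → f s₂ = some t → s₁ = s₂

/-- Chains of elements of `T` starting from an element that has a `g`-edge but is not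
in the image of `f`, following `g` then `f`. -/
inductive Chain {S T : Type*} (f : S → Option T) (g : T → Option S) : T → Prop
  | base (t : T) : (g t).isSome → (∀ s, f s ≠ some t) → Chain f g t
  | step (t : T) (s : S) (t' : T) : Chain f g t → g t = some s → f s = some t' →
      Chain f g t'

/-- The Matching Lemma: given finite sets `S`, `T` and matchings `f : S ⇸ T` and
`g : T ⇸ S`, there is a matching `M : S ⇸ T` whose coimage contains the coimage of `f`,
whose image contains the coimage of `g`, and such that `M(s) = t` implies `f(s) = t` or
`g(t) = s`. -/
theorem matching_lemma {S T : Type*} [Finite S] [Finite T]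
    (f : S → Option T) (g : T → Option S)
    (hf : IsMatching f) (hg : IsMatching g) :
    ∃ M : S → Option T, IsMatching M ∧
      (∀ s, (f s).isSome → (M s).isSome) ∧
      (∀ t, (g t).isSome → ∃ s, M s = some t) ∧
      (∀ s t, M s = some t → f s = some t ∨ g t = some s) := by
  classical
  set M : S → Option T := fun s =>
    if h : ∃ t, Chain f g t ∧ g t = some s then some h.choose else f s with hM
  have hMspec : ∀ s t, M s = some t →
      (Chain f g t ∧ g t = some s) ∨ (f s = some t ∧ ¬ ∃ t', Chain f g t' ∧ g t' = some s) := by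
    intro s t hst
    rw [hM] at hst
    simp only at hst
    by_cases h : ∃ t', Chain f g t' ∧ g t' = some s
    · rw [dif_pos h] at hst
      left
      have := h.choose_spec
      rwa [← Option.some_inj.mp hst]
    · rw [dif_neg h] at hst
      exact Or.inr ⟨hst, h⟩
  refine ⟨M, ?_, ?_, ?_, ?_⟩
  · -- IsMatching M
    intro s₁ s₂ t h1 h2
    rcases hMspec s₁ t h1 with ⟨hc1, hg1⟩ | ⟨hf1, hn1⟩ <;>
      rcases hMspec s₂ t h2 with ⟨hc2, hg2⟩ | ⟨hf2, hn2⟩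
    · exact Option.some_inj.mp (hg1 ▸ hg2)
    · -- Chain t, g t = s₁, f s₂ = t, no chain-edge at s₂
      exfalso
      cases hc1 with
      | base t h1 h2 => exact h2 s₂ hf2
      | step t₀ s' t hc hgs hfs =>
        exact hn2 ⟨t₀, hc, by rwa [hf s' s₂ t hfs hf2] at hgs⟩
    · exfalso
      cases hc2 with
      | base t h1 h2 => exact h2 s₁ hf1
      | step t₀ s' t hc hgs hfs =>
        exact hn1 ⟨t₀, hc, by rwa [hf s' s₁ t hfs hf1] at hgs⟩
    · exact hf s₁ s₂ t hf1 hf2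
  · -- coimage of f ⊆ coimage of M
    intro s hs
    rw [hM]
    simp only
    split
    · simp
    · exact hs
  · -- coimage of g ⊆ image of M
    intro t ht
    obtain ⟨s, hgs⟩ := Option.isSome_iff_exists.mp ht
    by_cases hc : Chain f g t
    · refine ⟨s, ?_⟩
      have hex : ∃ t', Chain f g t' ∧ g t' = some s := ⟨t, hc, hgs⟩
      rw [hM]
      simp only
      rw [dif_pos hex]
      have := hex.choose_spec
      exact congrArg some (hg _ _ s this.2 hgs)
    · -- t not in chain; then t ∈ im f
      by_cases him : ∃ s', f s' = some t
      · obtain ⟨s', hfs'⟩ := him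
        refine ⟨s', ?_⟩
        have hno : ¬ ∃ t', Chain f g t' ∧ g t' = some s' := by
          rintro ⟨t', hc', hg'⟩
          exact hc (Chain.step t' s' t hc' hg' hfs')
        rw [hM]
        simp only
        rw [dif_neg hno]
        exact hfs'
      · exact absurd (Chain.base t ht (fun s' h => him ⟨s', h⟩)) hc
  · -- M-edges come from f or g
    intro s t hst
    rcases hMspec s t hst with ⟨_, h⟩ | ⟨h, _⟩
    · exact Or.inr h
    · exact Or.inl h
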